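/- arXiv:2508.14328 — 3 statements merged into one kernel-verified Lean document; each statement's English description precedes it below -/
import Mathlib

section
/- Let $F, P: \mathcal{G} \to \mathbb{R}$ with $P(g) > 0$ on a nonempty set $\mathcal{G}$, and $p(c) = \inf_{g \in \mathcal{G}}(F(g) - cP(g))$. If $p(c^*) = 0$ and the infimum is attained at some $g^* \in \mathcal{G}$, then $g^*$ minimizes the ratio $F(g)/P(g)$ over $\mathcal{G}$, and the minimum ratio equals $c^*$. -/
/-- Dinkelbach's theorem: if `p(c*) = 0` and the infimum is attained at `g*`, then `g*`
minimizes the ratio `F g / P g` and the minimum ratio equals `c*`. -/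
theorem dinkelbach_root_optimal {G : Type*} [Nonempty G] (F P : G → ℝ)
    (hP : ∀ g, 0 < P g) (c : ℝ) (gstar : G)
    (hattain : ∀ g, F gstar - c * P gstar ≤ F g - c * P g)
    (hzero : F gstar - c * P gstar = 0) :
    (∀ g, F gstar / P gstar ≤ F g / P g) ∧ F gstar / P gstar = c := by
  have hstar : F gstar / P gstar = c := by
    rw [div_eq_iff (hP gstar).ne']
    linarith [hzero]
  refine ⟨fun g => ?_, hstar⟩
  rw [hstar, le_div_iff₀ (hP g)]
  have := hattain g
  nlinarith [hP g]
end

section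
/- Let $w_m, f_m > 0$ for $m = 1, \dots, M$ with $\sum_m f_m = 1$, and $a_m > 0$, $b \geq 0$. Consider $L(f) = b\sum_m \frac{w_m}{f_m} + \left(\sum_m \frac{w_m}{f_m}\right)\left(\sum_n f_n a_n\right)$. At any critical point of $L$ restricted to the simplex (via a Lagrange multiplier $\mu$), the multiplier satisfies $\mu = b \sum_{m=1}^M \frac{w_m}{f_m}$. -/
open Finset

/-- Lagrange multiplier identity: at any critical point of
`L f = b ∑ w m / f m + (∑ w m / f m) * (∑ f n * a n)` on the simplex, the multiplier satisfies
`μ = b ∑ w m / f m`. -/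
theorem lagrange_multiplier_identity (M : ℕ) (w f a : Fin M → ℝ) (b μ : ℝ)
    (hw : ∀ m, 0 < w m) (hf : ∀ m, 0 < f m) (ha : ∀ m, 0 < a m) (hb : 0 ≤ b)
    (hsum : ∑ m, f m = 1)
    (hstat : ∀ m, -(b * w m / (f m) ^ 2) + a m * (∑ n, w n / f n)
      - (w m / (f m) ^ 2) * (∑ n, f n * a n) + μ = 0) :
    μ = b * ∑ m, w m / f m := by
  set S := ∑ n, w n / f n with hS
  set T := ∑ n, f n * a n with hT
  have key : ∀ m, f m * μ = b * (w m / f m) - (f m * a m) * S + (w m / f m) * T := by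
    intro m
    have h := hstat m
    have hfm := (hf m).ne'
    field_simp at h ⊢
    nlinarith [h]
  have hsumkey : ∑ m, f m * μ = ∑ m, (b * (w m / f m) - (f m * a m) * S + (w m / f m) * T) :=
    Finset.sum_congr rfl fun m _ => key m
  rw [← Finset.sum_mul, hsum, one_mul] at hsumkey
  have hfin : ∑ m, (b * (w m / f m) - (f m * a m) * S + (w m / f m) * T)
      = b * S - T * S + S * T := by
    rw [Finset.sum_add_distrib, Finset.sum_sub_distrib, ← Finset.mul_sum, ← Finset.sum_mul,
      ← Finset.sum_mul, ← hS, ← hT]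
  rw [hsumkey, hfin]
  ring
end

section
/- Let $w_m > 0$, $a_m > 0$, $b > 0$. The minimizer over the open simplex of $L(f) = b\sum_m \frac{w_m}{f_m} + \left(\sum_m \frac{w_m}{f_m}\right)\left(\sum_n f_n a_n\right)$ is given by $f_m = \frac{\sqrt{w_m/(a_m + b)}}{\sum_{n=1}^M \sqrt{w_n/(a_n + b)}}$. -/
open Finset

/-- Closed-form optimal scheduling frequencies: the minimizer over the open simplex of
`L f = b ∑ w m / f m + (∑ w m / f m) * (∑ f n * a n)` is
`f* m = √(w m / (a m + b)) / ∑ n √(w n / (a n + b))`. -/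
theorem optimal_scheduling_frequency (M : ℕ) (hM : 0 < M) (w a : Fin M → ℝ) (b : ℝ)
    (hw : ∀ m, 0 < w m) (ha : ∀ m, 0 < a m) (hb : 0 < b) :
    let fstar : Fin M → ℝ :=
      fun m => Real.sqrt (w m / (a m + b)) / ∑ n, Real.sqrt (w n / (a n + b))
    let L : (Fin M → ℝ) → ℝ :=
      fun f => b * (∑ m, w m / f m) + (∑ m, w m / f m) * (∑ n, f n * a n)
    (∀ m, 0 < fstar m) ∧ (∑ m, fstar m = 1) ∧
      (∀ f : Fin M → ℝ, (∀ m, 0 < f m) → (∑ m, f m = 1) → L fstar ≤ L f) := by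
  intro fstar L
  haveI : Nonempty (Fin M) := Fin.pos_iff_nonempty.mp hM
  set c : Fin M → ℝ := fun m => a m + b with hcdef
  have hc : ∀ m, 0 < c m := fun m => add_pos (ha m) hb
  set T : ℝ := ∑ n, Real.sqrt (w n / (a n + b)) with hTdef
  have hTpos : 0 < T :=
    Finset.sum_pos (fun n _ => Real.sqrt_pos.2 (div_pos (hw n) (hc n))) Finset.univ_nonempty
  have hTne : T ≠ 0 := ne_of_gt hTpos
  set K : ℝ := ∑ n, Real.sqrt (w n * c n) with hKdef
  have hfstar : ∀ m, fstar m = Real.sqrt (w m / c m) / T := fun m => rfl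
  have hfpos : ∀ m, 0 < fstar m := by
    intro m
    rw [hfstar m]
    exact div_pos (Real.sqrt_pos.2 (div_pos (hw m) (hc m))) hTpos
  have hfsum : ∑ m, fstar m = 1 := by
    simp only [hfstar]
    rw [← Finset.sum_div, ← hTdef, div_self hTne]
  -- key reformulation: for any f with sum 1, L f = (∑ w/f) * (∑ f * c)
  have key : ∀ f : Fin M → ℝ, (∑ m, f m = 1) →
      L f = (∑ m, w m / f m) * (∑ n, f n * c n) := by
    intro f hsum
    have h1 : ∑ n, f n * c n = (∑ n, f n * a n) + b := by
      simp only [hcdef, mul_add, Finset.sum_add_distrib, ← Finset.sum_mul, hsum, one_mul]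
    simp only [L, h1]
    ring
  -- Cauchy–Schwarz lower bound
  have CS : ∀ f : Fin M → ℝ, (∀ m, 0 < f m) →
      K ^ 2 ≤ (∑ m, w m / f m) * (∑ n, f n * c n) := by
    intro f hf
    have hK' : K = ∑ m, Real.sqrt (w m / f m) * Real.sqrt (f m * c m) := by
      refine Finset.sum_congr rfl fun m _ => ?_
      rw [← Real.sqrt_mul (div_pos (hw m) (hf m)).le]
      congr 1
      field_simp [(hf m).ne']
    calc K ^ 2 = (∑ m, Real.sqrt (w m / f m) * Real.sqrt (f m * c m)) ^ 2 := by rw [hK']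
      _ ≤ (∑ m, Real.sqrt (w m / f m) ^ 2) * (∑ m, Real.sqrt (f m * c m) ^ 2) :=
          Finset.sum_mul_sq_le_sq_mul_sq _ _ _
      _ = (∑ m, w m / f m) * (∑ n, f n * c n) := by
          congr 1
          · exact Finset.sum_congr rfl fun m _ =>
              Real.sq_sqrt (div_pos (hw m) (hf m)).le
          · exact Finset.sum_congr rfl fun m _ =>
              Real.sq_sqrt (mul_nonneg (hf m).le (hc m).le)
  -- value at fstar is K^2
  have h1 : ∀ m, w m / fstar m = T * Real.sqrt (w m * c m) := by
    intro m
    have hsq : (0:ℝ) < Real.sqrt (w m / c m) := Real.sqrt_pos.2 (div_pos (hw m) (hc m))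
    have hs : Real.sqrt (w m / c m) * Real.sqrt (w m * c m) = w m := by
      rw [← Real.sqrt_mul (div_pos (hw m) (hc m)).le]
      have hcne : c m ≠ 0 := (hc m).ne'
      have h : w m / c m * (w m * c m) = (w m) ^ 2 := by
        field_simp [hcne]
      rw [h, Real.sqrt_sq (hw m).le]
    have hne : Real.sqrt (w m / c m) / T ≠ 0 := ne_of_gt (div_pos hsq hTpos)
    rw [hfstar m, div_eq_iff hne]
    have h2 : T * Real.sqrt (w m * c m) * (Real.sqrt (w m / c m) / T) =
        Real.sqrt (w m / c m) * Real.sqrt (w m * c m) := by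
      field_simp
    rw [h2, hs]
  have h2 : ∀ n, fstar n * c n = Real.sqrt (w n * c n) / T := by
    intro n
    have hcne : c n ≠ 0 := (hc n).ne'
    rw [hfstar n, div_mul_eq_mul_div]
    congr 1
    calc Real.sqrt (w n / c n) * c n
        = Real.sqrt (w n / c n) * Real.sqrt ((c n) ^ 2) := by
          rw [Real.sqrt_sq (hc n).le]
      _ = Real.sqrt (w n / c n * (c n) ^ 2) :=
          (Real.sqrt_mul (div_pos (hw n) (hc n)).le _).symm
      _ = Real.sqrt (w n * c n) := by
          congr 1
          field_simp [hcne]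
  have hLstar : L fstar = K ^ 2 := by
    rw [key fstar hfsum]
    simp only [h1, h2]
    rw [← Finset.mul_sum, ← Finset.sum_div, ← hKdef]
    field_simp
  refine ⟨hfpos, hfsum, fun f hf hsum => ?_⟩
  rw [hLstar, key f hsum]
  exact CS f hf
end
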